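/- Let m ∈ ℕ and let f_1, …, f_m : ℝ≥0 → ℝ be nondecreasing continuous functions. Then every μ ≥ 0 admits an equalizing distribution for f_1,…,f_m (i.e., Eq⟨f_1,…,f_m⟩ is a totally defined real function) if and only if f_1(0) = f_2(0) = ⋯ = f_m(0). -/

import Mathlib

open scoped NNReal

/-- `EqDistOn m f S t h`: the total mass `t` admits an equalizing distribution
among the functions `(f j)_{j ∈ S}` with common value `h`; i.e., there are
nonnegative reals `(ν j)_{j ∈ S}` summing to `t` with `f j (ν j) = h` for all
`j ∈ S`. When this holds, the equalization `Eq⟨f_j : j ∈ S⟩(t)` is defined and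
equals `h`. -/
def EqDistOn (m : ℕ) (f : Fin m → ℝ≥0 → ℝ) (S : Finset (Fin m)) (t : ℝ≥0) (h : ℝ) : Prop :=
  ∃ ν : Fin m → ℝ≥0, ∑ j ∈ S, ν j = t ∧ ∀ j ∈ S, f j (ν j) = h

/-- The hard direction, as an auxiliary lemma. -/
theorem exists_eq_dist_aux (m : ℕ) (hm : 0 < m)
    (f : Fin m → ℝ≥0 → ℝ) (hmono : ∀ j, Monotone (f j))
    (hcont : ∀ j, Continuous (f j)) (c0 : ℝ) (hc0 : ∀ j, f j 0 = c0)
    (μ : ℝ≥0) (hμ : 0 < μ) :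
    ∃ h : ℝ, EqDistOn m f Finset.univ μ h := by
  classical
  haveI : Nonempty (Fin m) := ⟨⟨0, hm⟩⟩
  -- the "inverse" functions
  set S : Fin m → ℝ → Set ℝ≥0 := fun j c => {x | x ≤ μ ∧ f j x ≤ c} with hS
  set g : Fin m → ℝ → ℝ≥0 := fun j c => sSup (S j c) with hg
  have hSsub : ∀ j c, S j c ⊆ Set.Icc 0 μ := fun j c x hx => ⟨zero_le, hx.1⟩
  have hScomp : ∀ j c, IsCompact (S j c) := by
    intro j c
    refine IsCompact.of_isClosed_subset isCompact_Icc ?_ (hSsub j c)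
    exact (isClosed_Iic).inter (IsClosed.preimage (hcont j) isClosed_Iic)
  have hSbdd : ∀ j c, BddAbove (S j c) := fun j c => ⟨μ, fun x hx => hx.1⟩
  have hS0 : ∀ j c, c0 ≤ c → (0 : ℝ≥0) ∈ S j c := by
    intro j c hc; exact ⟨zero_le, by rw [hc0 j]; exact hc⟩
  have hgmem : ∀ j c, c0 ≤ c → g j c ∈ S j c := by
    intro j c hc
    exact (hScomp j c).sSup_mem ⟨0, hS0 j c hc⟩
  have hgle : ∀ j c, g j c ≤ μ := by
    intro j c
    rcases Set.eq_empty_or_nonempty (S j c) with h | h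
    · simp [hg, h]
    · exact csSup_le h fun x hx => hx.1
  have hle_g : ∀ j c x, x ∈ S j c → x ≤ g j c := fun j c x hx => le_csSup (hSbdd j c) hx
  have hgmono : ∀ j, Monotone (g j) := by
    intro j c c' hcc'
    rcases Set.eq_empty_or_nonempty (S j c) with h | h
    · simp [hg, h]
    · exact csSup_le_csSup (hSbdd j c') h fun x hx => ⟨hx.1, hx.2.trans hcc'⟩
  -- total mass function
  set F : ℝ → ℝ≥0 := fun c => ∑ j, g j c with hF
  have hFmono : Monotone F := fun c c' h => Finset.sum_le_sum fun j _ => hgmono j h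
  -- the target set of values
  set A : Set ℝ := {c | c0 ≤ c ∧ μ ≤ F c} with hA
  have hAne : A.Nonempty := by
    obtain ⟨C, hC⟩ : ∃ C : ℝ, c0 ≤ C ∧ ∀ j, f j μ ≤ C := by
      obtain ⟨C, hC⟩ := Finset.exists_le (Finset.image (fun j => f j μ) Finset.univ)
      refine ⟨max C c0, le_max_right _ _, fun j => ?_⟩
      exact le_trans (hC _ (Finset.mem_image_of_mem _ (Finset.mem_univ j))) (le_max_left _ _)
    refine ⟨C, hC.1, ?_⟩
    have : ∀ j, g j C = μ := by
      intro j
      refine le_antisymm (hgle j C) (hle_g j C μ ⟨le_rfl, hC.2 j⟩)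
    calc μ = g ⟨0, hm⟩ C := (this _).symm
    _ ≤ F C := Finset.single_le_sum (f := fun i => g i C) (fun j _ => zero_le) (Finset.mem_univ _)
  have hAbdd : BddBelow A := ⟨c0, fun c hc => hc.1⟩
  set c' : ℝ := sInf A with hc'
  have hc'c0 : c0 ≤ c' := le_csInf hAne fun c hc => hc.1
  -- sequences approaching c' from above and below
  set d : ℕ → ℝ := fun n => c' + 1 / (n + 1) with hd
  set e : ℕ → ℝ := fun n => c' - 1 / (n + 1) with he
  have hinv_anti : Antitone (fun n : ℕ => 1 / ((n : ℝ) + 1)) := by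
    intro a b hab
    apply one_div_le_one_div_of_le
    · positivity
    · have : (a : ℝ) ≤ b := Nat.cast_le.2 hab
      linarith
  have hinv_tendsto : Filter.Tendsto (fun n : ℕ => 1 / ((n : ℝ) + 1)) Filter.atTop (nhds 0) :=
    tendsto_one_div_add_atTop_nhds_zero_nat
  have hd_anti : Antitone d := fun a b hab => by
    simp only [hd]; have := hinv_anti hab; linarith
  have he_mono : Monotone e := fun a b hab => by
    simp only [he]; have := hinv_anti hab; linarith
  have hd_tendsto : Filter.Tendsto d Filter.atTop (nhds c') := by
    have h := Filter.Tendsto.const_add c' hinv_tendsto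
    rw [add_zero] at h; exact h
  have he_tendsto : Filter.Tendsto e Filter.atTop (nhds c') := by
    have h := Filter.Tendsto.const_sub c' hinv_tendsto
    rw [sub_zero] at h; exact h
  have hd_gt : ∀ n, c' < d n := by
    intro n; simp only [hd]; have : (0:ℝ) < 1 / (n+1) := by positivity
    linarith
  have he_lt : ∀ n, e n < c' := by
    intro n; simp only [he]; have : (0:ℝ) < 1 / (n+1) := by positivity
    linarith
  have hd_mem : ∀ n, μ ≤ F (d n) := by
    intro n
    obtain ⟨c, hcA, hc⟩ := exists_lt_of_csInf_lt hAne (hd_gt n)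
    exact le_trans hcA.2 (hFmono hc.le)
  -- F c' ≥ μ (right continuity argument)
  have hd_c0 : ∀ n, c0 ≤ d n := fun n => hc'c0.trans (hd_gt n).le
  set y : Fin m → ℝ≥0 := fun j => ⨅ n, g j (d n) with hy
  have hy_tendsto : ∀ j, Filter.Tendsto (fun n => g j (d n)) Filter.atTop (nhds (y j)) := by
    intro j
    exact tendsto_atTop_ciInf (fun a b hab => hgmono j (hd_anti hab)) (OrderBot.bddBelow _)
  have hy_mem : ∀ j, y j ∈ S j c' := by
    intro j
    constructor
    · exact le_trans (ciInf_le (OrderBot.bddBelow _) 0) (hgle j (d 0))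
    · have h1 : Filter.Tendsto (fun n => f j (g j (d n))) Filter.atTop (nhds (f j (y j))) :=
        ((hcont j).tendsto _).comp (hy_tendsto j)
      refine le_of_tendsto_of_tendsto h1 hd_tendsto ?_
      exact Filter.Eventually.of_forall fun n => (hgmem j (d n) (hd_c0 n)).2
  have hFc' : μ ≤ F c' := by
    have h1 : Filter.Tendsto (fun n => F (d n)) Filter.atTop (nhds (∑ j, y j)) := by
      exact tendsto_finset_sum _ fun j _ => hy_tendsto j
    have h2 : μ ≤ ∑ j, y j := ge_of_tendsto h1 (Filter.Eventually.of_forall hd_mem)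
    exact h2.trans (Finset.sum_le_sum fun j _ => hle_g j c' (y j) (hy_mem j))
  -- left limits
  set w : Fin m → ℝ≥0 := fun j => ⨆ n, g j (e n) with hw
  have hw_bdd : ∀ j, BddAbove (Set.range fun n => g j (e n)) :=
    fun j => ⟨μ, by rintro x ⟨n, rfl⟩; exact hgle j (e n)⟩
  have hw_tendsto : ∀ j, Filter.Tendsto (fun n => g j (e n)) Filter.atTop (nhds (w j)) := by
    intro j
    exact tendsto_atTop_ciSup (fun a b hab => hgmono j (he_mono hab)) (hw_bdd j)
  have hw_le : ∀ j, w j ≤ g j c' :=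
    fun j => ciSup_le fun n => hgmono j (he_lt n).le
  have hF_e : ∀ n, F (e n) ≤ μ := by
    intro n
    by_cases hec : c0 ≤ e n
    · by_contra h
      push_neg at h
      exact absurd (csInf_le hAbdd ⟨hec, h.le⟩) (not_le.2 (he_lt n))
    · push_neg at hec
      have : ∀ j, g j (e n) = 0 := by
        intro j
        have : S j (e n) = ∅ := by
          ext x
          simp only [hS, Set.mem_setOf_eq, Set.mem_empty_iff_false, iff_false, not_and, not_le]
          intro _
          calc e n < c0 := hec
          _ = f j 0 := (hc0 j).symm
          _ ≤ f j x := hmono j (zero_le)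
        simp [hg, this]
      simp [hF, this]
  have hL_le : ∑ j, w j ≤ μ := by
    have h1 : Filter.Tendsto (fun n => F (e n)) Filter.atTop (nhds (∑ j, w j)) :=
      tendsto_finset_sum _ fun j _ => hw_tendsto j
    exact le_of_tendsto h1 (Filter.Eventually.of_forall hF_e)
  -- key fact (B) : f j (w j) ≥ c'
  have hfw : ∀ j, c' ≤ f j (w j) := by
    intro j
    by_contra hlt
    push_neg at hlt
    set c := (f j (w j) + c') / 2 with hcdef
    have hc1 : f j (w j) < c := by simp only [hcdef]; linarith
    have hc2 : c < c' := by simp only [hcdef]; linarith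
    have hwmem : w j ∈ S j c := ⟨le_trans (hw_le j) (hgle j c'), hc1.le⟩
    have hgc_ge : w j ≤ g j c := hle_g j c _ hwmem
    have hgc_le : g j c ≤ w j := by
      obtain ⟨n, hn⟩ : ∃ n : ℕ, 1 / ((n : ℝ) + 1) ≤ c' - c := by
        obtain ⟨n, hn⟩ := exists_nat_gt (1 / (c' - c))
        refine ⟨n, ?_⟩
        rw [div_le_iff₀ (by linarith)]
        rw [div_lt_iff₀ (by linarith)] at hn
        nlinarith
      have : c ≤ e n := by simp only [he]; linarith
      exact le_trans (hgmono j this) (le_ciSup (hw_bdd j) n)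
    have hgc : g j c = w j := le_antisymm hgc_le hgc_ge
    rcases lt_or_eq_of_le (le_trans (hw_le j) (hgle j c')) with hwμ | hwμ
    · -- w j < μ : continuity gives a point beyond w j still in S j c
      have hev : ∀ᶠ x in nhds (w j), f j x < c ∧ x < μ := by
        have h1 : ∀ᶠ x in nhds (w j), f j x < c :=
          (hcont j).continuousAt.eventually_lt continuousAt_const hc1
        have h2 : ∀ᶠ x in nhds (w j), x < μ := Filter.tendsto_id.eventually_lt_const hwμ
        exact h1.and h2
      have : ∃ x, w j < x ∧ f j x < c ∧ x < μ := by
        have := (hev.filter_mono (nhdsWithin_le_nhds (s := Set.Ioi (w j)))).and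
          (eventually_mem_nhdsWithin)
        obtain ⟨x, hx1, hx2⟩ := this.exists
        exact ⟨x, hx2, hx1.1, hx1.2⟩
      obtain ⟨x, hx1, hx2, hx3⟩ := this
      have : x ≤ g j c := hle_g j c x ⟨hx3.le, hx2.le⟩
      rw [hgc] at this
      exact absurd hx1 (not_lt.2 this)
    · -- w j = μ : then F c ≥ μ, so c ∈ A, contradicting c < c'
      have hgcμ : g j c = μ := by rw [hgc, hwμ]
      have hFc : μ ≤ F c := by
        calc μ = g j c := hgcμ.symm
        _ ≤ F c := Finset.single_le_sum (f := fun i => g i c) (fun i _ => zero_le) (Finset.mem_univ _)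
      have hcc0 : c0 ≤ c := by
        have : c0 = f j 0 := (hc0 j).symm
        have h2 : f j 0 ≤ f j (w j) := hmono j (zero_le)
        linarith
      exact absurd (csInf_le hAbdd ⟨hcc0, hFc⟩) (not_le.2 hc2)
  -- key fact (A) : f j (g j c') ≤ c'
  have hfg : ∀ j, f j (g j c') ≤ c' := fun j => (hgmem j c' hc'c0).2
  -- construct the distribution
  set L : ℝ≥0 := ∑ j, w j with hL
  set Δ : Fin m → ℝ≥0 := fun j => g j c' - w j with hΔ
  set D : ℝ≥0 := ∑ j, Δ j with hD
  have hΔsum : L + D = F c' := by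
    rw [hL, hD, ← Finset.sum_add_distrib]
    exact Finset.sum_congr rfl fun j _ => add_tsub_cancel_of_le (hw_le j)
  have hμLD : μ - L ≤ D := by
    have : μ ≤ L + D := hΔsum ▸ hFc'
    exact tsub_le_iff_left.2 this
  set θ : ℝ≥0 := (μ - L) / D with hθ
  have hθ1 : θ ≤ 1 := by
    rcases eq_or_ne D 0 with h | h
    · simp [hθ, h]
    · rw [hθ, div_le_one (zero_lt_iff.2 h)]
      exact hμLD
  set ν : Fin m → ℝ≥0 := fun j => w j + θ * Δ j with hν
  have hν_le : ∀ j, ν j ≤ g j c' := by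
    intro j
    have : θ * Δ j ≤ Δ j := by
      calc θ * Δ j ≤ 1 * Δ j := mul_le_mul_of_nonneg_right hθ1 zero_le
      _ = Δ j := one_mul _
    calc ν j ≤ w j + Δ j := add_le_add_right this _
    _ = g j c' := add_tsub_cancel_of_le (hw_le j)
  have hν_ge : ∀ j, w j ≤ ν j := fun j => le_self_add
  have hν_sum : ∑ j, ν j = μ := by
    have : ∑ j, ν j = L + θ * D := by
      rw [hν, hL, hD, Finset.sum_add_distrib, Finset.mul_sum]
    rw [this]
    rcases eq_or_ne D 0 with h | h
    · have hLμ : L = μ := by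
        have h1 : F c' = L := by rw [← hΔsum, h, add_zero]
        have h2 : μ ≤ L := h1 ▸ hFc'
        exact le_antisymm hL_le h2
      rw [h, mul_zero, add_zero, hLμ]
    · rw [hθ, div_mul_cancel₀ _ h]
      exact add_tsub_cancel_of_le hL_le
  refine ⟨c', ν, hν_sum, fun j _ => ?_⟩
  have h1 : c' ≤ f j (ν j) := (hfw j).trans (hmono j (hν_ge j))
  have h2 : f j (ν j) ≤ c' := (hmono j (hν_le j)).trans_eq' rfl |>.trans (hfg j) |>.trans_eq rfl
  · exact le_antisymm (le_trans (hmono j (hν_le j)) (hfg j)) h1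

/-- For continuous nondecreasing `f_1, …, f_m`, every total
mass `μ ≥ 0` admits an equalizing distribution (i.e., the equalization is a
totally defined real function) iff `f_1(0) = f_2(0) = ⋯ = f_m(0)`. -/
theorem equalization_total_iff_same_bottom (m : ℕ) (hm : 0 < m)
    (f : Fin m → ℝ≥0 → ℝ) (hmono : ∀ j, Monotone (f j))
    (hcont : ∀ j, Continuous (f j)) :
    (∀ μ : ℝ≥0, ∃ h : ℝ, EqDistOn m f Finset.univ μ h) ↔
      ∀ i j : Fin m, f i 0 = f j 0 := by
  constructor
  · intro htot i j
    obtain ⟨h, ν, hsum, hval⟩ := htot 0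
    have hν0 : ∀ k : Fin m, ν k = 0 := by
      intro k
      have := Finset.sum_eq_zero_iff.1 hsum k (Finset.mem_univ k)
      exact this
    have hi := hval i (Finset.mem_univ i)
    have hj := hval j (Finset.mem_univ j)
    rw [hν0 i] at hi
    rw [hν0 j] at hj
    rw [hi, hj]
  · intro hf0 μ
    rcases eq_or_lt_of_le ((zero_le : (0:ℝ≥0) ≤ μ)) with hμ | hμ
    · exact ⟨f ⟨0, hm⟩ 0, 0, by simp [← hμ], fun j _ => hf0 j ⟨0, hm⟩⟩
    · exact exists_eq_dist_aux m hm f hmono hcont (f ⟨0, hm⟩ 0)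
        (fun j => hf0 j ⟨0, hm⟩) μ hμ
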